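/- Let (K,v) be a spherically complete valued field (every chain of closed balls has nonempty intersection). Then (K,v) is algebraically maximal, i.e., it admits no proper immediate algebraic extension. -/

import Mathlib

universe u

/-- Let `(K, v)` be a spherically complete valued field: every nonempty
chain (under inclusion) of closed balls `{x | v (x − a) ≤ γ}` (with `γ ≠ 0`) has nonempty
intersection. Then `(K, v)` is algebraically maximal: it admits no proper immediate
algebraic extension. Here an algebraic extension `(L, w)/(K, v)` (with `w` extending `v`)
is immediate if the value groups and residue fields agree. -/
theorem algMax_of_sphericallyComplete {K : Type u} [Field K]
    {Γ₀ : Type*} [LinearOrderedCommGroupWithZero Γ₀] (v : Valuation K Γ₀)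
    (hsc : ∀ C : Set (Set K),
      (∀ S ∈ C, ∃ (a : K) (γ : Γ₀), γ ≠ 0 ∧ S = {x : K | v (x - a) ≤ γ}) →
      C.Nonempty → IsChain (· ⊆ ·) C → (⋂₀ C).Nonempty) :
    ∀ (L : Type u) [Field L] [Algebra K L], Algebra.IsAlgebraic K L →
      ∀ w : Valuation L Γ₀, (∀ x : K, w (algebraMap K L x) = v x) →
        (∀ x : L, x ≠ 0 → ∃ y : K, w x = v y) →
        (∀ x : L, w x = 1 → ∃ y : K, w (x - algebraMap K L y) < 1) →
        Function.Surjective (algebraMap K L) := by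
  intro L _ _ _ w hw h2 h3 x
  by_contra hx
  push_neg at hx
  have hne : ∀ c : K, x - algebraMap K L c ≠ 0 := by
    intro c h
    exact hx c (by rw [eq_comm, ← sub_eq_zero]; exact h)
  have hwne : ∀ c : K, w (x - algebraMap K L c) ≠ 0 := fun c => w.ne_zero_iff.mpr (hne c)
  -- improvement step
  have key : ∀ c : K, ∃ c' : K,
      w (x - algebraMap K L c') < w (x - algebraMap K L c) := by
    intro c
    obtain ⟨d, hd⟩ := h2 _ (hne c)
    have hvd : v d ≠ 0 := hd ▸ hwne c
    have hdK : d ≠ 0 := v.ne_zero_iff.mp hvd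
    have h1 : w ((x - algebraMap K L c) * (algebraMap K L d)⁻¹) = 1 := by
      rw [map_mul, map_inv₀, hw, ← hd, mul_inv_cancel₀ (hwne c)]
    obtain ⟨e, he⟩ := h3 _ h1
    refine ⟨c + d * e, ?_⟩
    have heq : x - algebraMap K L (c + d * e)
        = ((x - algebraMap K L c) * (algebraMap K L d)⁻¹ - algebraMap K L e)
            * algebraMap K L d := by
      have hdL : algebraMap K L d ≠ 0 := by
        simpa using (map_ne_zero (algebraMap K L)).mpr hdK
      field_simp
      simp only [map_add, map_mul]; ring
    rw [heq, map_mul, hw, hd]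
    calc w ((x - algebraMap K L c) * (algebraMap K L d)⁻¹ - algebraMap K L e) * v d
        < 1 * v d := by
          rw [mul_comm, mul_comm 1]; exact mul_lt_mul_of_pos_left he (zero_lt_iff.mpr hvd)
      _ = v d := one_mul _
  -- the chain of balls
  set B : K → Set K := fun c => {y : K | v (y - c) ≤ w (x - algebraMap K L c)} with hB
  have hBmono : ∀ c₁ c₂ : K,
      w (x - algebraMap K L c₁) ≤ w (x - algebraMap K L c₂) → B c₁ ⊆ B c₂ := by
    intro c₁ c₂ hle y hy
    have hy' : v (y - c₁) ≤ w (x - algebraMap K L c₁) := hy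
    show v (y - c₂) ≤ w (x - algebraMap K L c₂)
    have : w (algebraMap K L (y - c₂)) ≤ w (x - algebraMap K L c₂) := by
      have hsplit : algebraMap K L (y - c₂)
          = algebraMap K L (y - c₁) + ((algebraMap K L c₁ - x) + (x - algebraMap K L c₂)) := by
        rw [map_sub, map_sub]; ring
      rw [hsplit]
      refine le_trans (w.map_add _ _) (max_le ?_ (le_trans (w.map_add _ _) (max_le ?_ le_rfl)))
      · rw [hw]; exact le_trans hy' hle
      · rw [← Valuation.map_sub_swap]; exact hle
    rwa [hw] at this
  obtain ⟨z, hz⟩ := hsc (Set.range B)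
    (by
      rintro S ⟨c, rfl⟩
      exact ⟨c, w (x - algebraMap K L c), hwne c, rfl⟩)
    ⟨B 0, ⟨0, rfl⟩⟩
    (by
      rintro S ⟨c₁, rfl⟩ T ⟨c₂, rfl⟩ -
      rcases le_total (w (x - algebraMap K L c₁)) (w (x - algebraMap K L c₂)) with h | h
      · exact Or.inl (hBmono _ _ h)
      · exact Or.inr (hBmono _ _ h))
  have hzc : ∀ c : K, v (z - c) ≤ w (x - algebraMap K L c) := by
    intro c
    exact hz (B c) ⟨c, rfl⟩
  obtain ⟨c', hc'⟩ := key z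
  have h1 : v (z - c') ≤ w (x - algebraMap K L c') := hzc c'
  have : w (x - algebraMap K L z) ≤ max (w (x - algebraMap K L c')) (v (z - c')) := by
    have hsplit : x - algebraMap K L z
        = (x - algebraMap K L c') + algebraMap K L (c' - z) := by
      rw [map_sub]; ring
    rw [hsplit]
    refine le_trans (w.map_add _ _) (max_le (le_max_left _ _) ?_)
    rw [hw, Valuation.map_sub_swap]
    exact le_max_right _ _
  have hlt : max (w (x - algebraMap K L c')) (v (z - c')) < w (x - algebraMap K L z) :=
    max_lt hc' (lt_of_le_of_lt h1 hc')
  exact absurd (lt_of_le_of_lt this hlt) (lt_irrefl _)
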